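/- Let d ≥ 1, let K ⊆ ℝ^d be compact and L ⊆ ℝ^d be closed with K ∩ L = ∅. Then there exist ρ > 0 and a sequence (χ_N)_{N≥1} of smooth, compactly supported functions χ_N : ℝ^d → [0,1] such that for every N ≥ 1: χ_N = 1 on K, χ_N = 0 on L, and for every integer j with 0 ≤ j ≤ N and every x ∈ ℝ^d, the operator norm of the j-th iterated total derivative satisfies ‖D^j χ_N(x)‖ ≤ (ρ N)^j. -/

import Mathlib

open Metric Set MeasureTheory Function ContinuousLinearMap
open scoped Convolution ENNReal Topology

/-- Basic convolution sup bound: `‖(f ⋆ g) x‖ ≤ ‖L‖ * ∫‖f‖ * C` when `‖g‖ ≤ C`. -/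
private lemma ehren_conv_bound₀ {d : ℕ} {E F F' : Type}
    [NormedAddCommGroup E] [NormedSpace ℝ E] [NormedAddCommGroup F] [NormedSpace ℝ F]
    [NormedAddCommGroup F'] [NormedSpace ℝ F']
    (L : E →L[ℝ] F →L[ℝ] F') {f : EuclideanSpace ℝ (Fin d) → E}
    {g : EuclideanSpace ℝ (Fin d) → F}
    (hf : Integrable f volume) {C : ℝ} (hg : ∀ y, ‖g y‖ ≤ C)
    (x : EuclideanSpace ℝ (Fin d)) :
    ‖(f ⋆[L, volume] g) x‖ ≤ ‖L‖ * (∫ t, ‖f t‖) * C := by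
  have h1 : ∀ t, ‖L (f t) (g (x - t))‖ ≤ (‖L‖ * C) * ‖f t‖ := fun t => by
    have h2 : ‖L (f t) (g (x - t))‖ ≤ ‖L‖ * ‖f t‖ * ‖g (x - t)‖ := L.le_opNorm₂ _ _
    have h3 : ‖L‖ * ‖f t‖ * ‖g (x - t)‖ ≤ ‖L‖ * ‖f t‖ * C :=
      mul_le_mul_of_nonneg_left (hg _) (by positivity)
    calc ‖L (f t) (g (x - t))‖ ≤ ‖L‖ * ‖f t‖ * C := h2.trans h3
    _ = (‖L‖ * C) * ‖f t‖ := by ring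
  rw [convolution_def]
  calc ‖∫ t, L (f t) (g (x - t))‖ ≤ ∫ t, (‖L‖ * C) * ‖f t‖ :=
        norm_integral_le_of_norm_le (hf.norm.const_mul _) (Filter.Eventually.of_forall h1)
  _ = ‖L‖ * (∫ t, ‖f t‖) * C := by rw [integral_const_mul]; ring

/-- Derivative bound for convolutions: all derivatives land on the (smooth, compactly
supported) right factor. -/
private lemma ehren_conv_bound {d : ℕ} {E : Type} [NormedAddCommGroup E] [NormedSpace ℝ E]
    (m : ℕ) :
    ∀ {F F' : Type} [NormedAddCommGroup F] [NormedSpace ℝ F]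
      [NormedAddCommGroup F'] [NormedSpace ℝ F'] [CompleteSpace F']
      (L : E →L[ℝ] F →L[ℝ] F') (f : EuclideanSpace ℝ (Fin d) → E)
      (g : EuclideanSpace ℝ (Fin d) → F),
      Integrable f volume → ContDiff ℝ (⊤ : ℕ∞) g → HasCompactSupport g →
      ∀ {C : ℝ}, (∀ y, ‖iteratedFDeriv ℝ m g y‖ ≤ C) →
      ∀ x, ‖iteratedFDeriv ℝ m (f ⋆[L, volume] g) x‖ ≤ ‖L‖ * (∫ t, ‖f t‖) * C := by
  induction m with
  | zero =>
    intro F F' _ _ _ _ _ L f g hf hg hgc C hC x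
    rw [norm_iteratedFDeriv_zero]
    exact ehren_conv_bound₀ L hf (fun y => by
      simpa [norm_iteratedFDeriv_zero] using hC y) x
  | succ m IH =>
    intro F F' _ _ _ _ _ L f g hf hg hgc C hC x
    have hC0 : 0 ≤ C := le_trans (norm_nonneg _) (hC 0)
    have hI : 0 ≤ ∫ t, ‖f t‖ := integral_nonneg fun t => norm_nonneg _
    have hfd : fderiv ℝ (f ⋆[L, volume] g)
        = f ⋆[L.precompR (EuclideanSpace ℝ (Fin d)), volume] fderiv ℝ g :=
      funext fun y =>
        (hgc.hasFDerivAt_convolution_right L hf.locallyIntegrable (hg.of_le (mod_cast le_top)) y).fderiv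
    have h1 : ‖iteratedFDeriv ℝ (m+1) (f ⋆[L, volume] g) x‖
        = ‖iteratedFDeriv ℝ m
            (f ⋆[L.precompR (EuclideanSpace ℝ (Fin d)), volume] fderiv ℝ g) x‖ := by
      rw [← norm_iteratedFDeriv_fderiv, hfd]
    rw [h1]
    have hCm : ∀ y, ‖iteratedFDeriv ℝ m (fderiv ℝ g) y‖ ≤ C := fun y => by
      rw [norm_iteratedFDeriv_fderiv]; exact hC y
    refine (IH (L.precompR (EuclideanSpace ℝ (Fin d))) f (fderiv ℝ g) hf
      (hg.fderiv_right (mod_cast le_top)) (hgc.fderiv ℝ) hCm x).trans ?_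
    exact mul_le_mul_of_nonneg_right
      (mul_le_mul_of_nonneg_right (L.norm_precompR_le _) hI) hC0

/-- The iterated regularization: indicator of `E0` convolved `k` times with `ψ`. -/
private noncomputable def ehrenSeq {d : ℕ} (E0 : Set (EuclideanSpace ℝ (Fin d)))
    (ψ : EuclideanSpace ℝ (Fin d) → ℝ) : ℕ → EuclideanSpace ℝ (Fin d) → ℝ
  | 0 => Set.indicator E0 (fun _ => (1 : ℝ))
  | (k+1) => (ehrenSeq E0 ψ k) ⋆[ContinuousLinearMap.mul ℝ ℝ, volume] ψ

set_option maxHeartbeats 1000000 in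
private lemma ehren_one {d : ℕ} (E0 : Set (EuclideanSpace ℝ (Fin d)))
    (hEc : IsCompact E0) (ψ : EuclideanSpace ℝ (Fin d) → ℝ)
    (hψs : ContDiff ℝ (⊤ : ℕ∞) ψ) (hψc : HasCompactSupport ψ)
    (hψ0 : ∀ x, 0 ≤ ψ x) (hψ1 : (∫ x, ψ x) = 1)
    {r : ℝ} (hsupp : support ψ ⊆ ball 0 r)
    {B : ℝ} (hB : (∫ x, ‖fderiv ℝ ψ x‖) ≤ B)
    (k₀ : ℕ) (hk₀ : 1 ≤ k₀) :
    ContDiff ℝ (⊤ : ℕ∞) (ehrenSeq E0 ψ k₀) ∧ HasCompactSupport (ehrenSeq E0 ψ k₀) ∧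
      (∀ x, ehrenSeq E0 ψ k₀ x ∈ Icc (0:ℝ) 1) ∧
      (∀ x, (∀ y, dist y x ≤ k₀ * r → y ∈ E0) → ehrenSeq E0 ψ k₀ x = 1) ∧
      (∀ x, (∀ y, dist y x ≤ k₀ * r → y ∉ E0) → ehrenSeq E0 ψ k₀ x = 0) ∧
      (∀ j, j ≤ k₀ → ∀ x, ‖iteratedFDeriv ℝ j (ehrenSeq E0 ψ k₀) x‖ ≤ B ^ j) := by
  have hsucc : ∀ k, ehrenSeq E0 ψ (k+1)
      = (ehrenSeq E0 ψ k) ⋆[ContinuousLinearMap.mul ℝ ℝ, volume] ψ := fun k => rfl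
  have hzero : ehrenSeq E0 ψ 0 = Set.indicator E0 (fun _ => (1:ℝ)) := rfl
  have hψi : Integrable ψ volume := hψs.continuous.integrable_of_hasCompactSupport hψc
  have hψsub : ∀ x : EuclideanSpace ℝ (Fin d), Integrable (fun t => ψ (x - t)) volume :=
    fun x => hψi.comp_sub_left x
  have hψsubint : ∀ x : EuclideanSpace ℝ (Fin d), (∫ t, ψ (x - t)) = 1 := fun x => by
    rw [integral_sub_left_eq_self ψ volume x]; exact hψ1
  have hform : ∀ k x, ehrenSeq E0 ψ (k+1) x = ∫ t, ehrenSeq E0 ψ k t * ψ (x - t) := by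
    intro k x
    rw [hsucc, convolution_def]
    simp only [ContinuousLinearMap.mul_apply']
  -- basic structural facts
  have basic : ∀ k, Integrable (ehrenSeq E0 ψ k) volume ∧ HasCompactSupport (ehrenSeq E0 ψ k) ∧
      (∀ x, ehrenSeq E0 ψ k x ∈ Icc (0:ℝ) 1) ∧
      (1 ≤ k → ContDiff ℝ (⊤ : ℕ∞) (ehrenSeq E0 ψ k)) := by
    intro k
    induction k with
    | zero =>
      refine ⟨?_, ?_, ?_, by omega⟩
      · rw [hzero, integrable_indicator_iff hEc.measurableSet]
        exact integrableOn_const hEc.measure_lt_top.ne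
      · rw [hzero]
        exact HasCompactSupport.intro hEc fun x hx => Set.indicator_of_notMem hx _
      · intro x
        rw [hzero]
        by_cases hx : x ∈ E0 <;> simp [hx]
    | succ k IH =>
      obtain ⟨hi, hc, hicc, -⟩ := IH
      have hsm : ContDiff ℝ (⊤ : ℕ∞) (ehrenSeq E0 ψ (k+1)) := by
        rw [hsucc]
        exact HasCompactSupport.contDiff_convolution_right (L := ContinuousLinearMap.mul ℝ ℝ) hψc hi.locallyIntegrable hψs
      have hcs : HasCompactSupport (ehrenSeq E0 ψ (k+1)) := by
        rw [hsucc]; exact HasCompactSupport.convolution (L := ContinuousLinearMap.mul ℝ ℝ) hc hψc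
      have hval : ∀ x, ehrenSeq E0 ψ (k+1) x ∈ Icc (0:ℝ) 1 := by
        intro x
        constructor
        · rw [hform]
          exact integral_nonneg fun t => mul_nonneg (hicc t).1 (hψ0 _)
        · rw [hform, ← hψsubint x]
          refine integral_mono_of_nonneg
            (Filter.Eventually.of_forall fun t => mul_nonneg (hicc t).1 (hψ0 _))
            (hψsub x) (Filter.Eventually.of_forall fun t => ?_)
          exact mul_le_of_le_one_left (hψ0 _) (hicc t).2
      exact ⟨hsm.continuous.integrable_of_hasCompactSupport hcs, hcs, hval, fun _ => hsm⟩
  -- value 1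
  have val1 : ∀ k : ℕ, ∀ x, (∀ y, dist y x ≤ (k : ℝ) * r → y ∈ E0) → ehrenSeq E0 ψ k x = 1 := by
    intro k
    induction k with
    | zero =>
      intro x hx
      have hxE : x ∈ E0 := hx x (by simp)
      rw [hzero]; simp [hxE]
    | succ k IH =>
      intro x hx
      have heq : (fun t => ehrenSeq E0 ψ k t * ψ (x - t)) = fun t => ψ (x - t) := by
        funext t
        by_cases hz : ψ (x - t) = 0
        · simp [hz]
        · have hmem : x - t ∈ ball (0 : EuclideanSpace ℝ (Fin d)) r := hsupp hz
          have hdist : dist t x < r := by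
            rw [dist_comm, dist_eq_norm]
            simpa [mem_ball_zero_iff] using hmem
          have h1 : ehrenSeq E0 ψ k t = 1 := by
            refine IH t fun y hy => hx y ?_
            calc dist y x ≤ dist y t + dist t x := dist_triangle _ _ _
              _ ≤ k * r + r := add_le_add hy hdist.le
              _ = (k + 1 : ℕ) * r := by push_cast; ring
          rw [h1, one_mul]
      rw [hform, heq, hψsubint x]
  -- value 0
  have val0 : ∀ k : ℕ, ∀ x, (∀ y, dist y x ≤ (k : ℝ) * r → y ∉ E0) → ehrenSeq E0 ψ k x = 0 := by
    intro k
    induction k with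
    | zero =>
      intro x hx
      have hxE : x ∉ E0 := hx x (by simp)
      rw [hzero]; simp [hxE]
    | succ k IH =>
      intro x hx
      have heq : (fun t => ehrenSeq E0 ψ k t * ψ (x - t)) = fun _ => (0:ℝ) := by
        funext t
        by_cases hz : ψ (x - t) = 0
        · simp [hz]
        · have hmem : x - t ∈ ball (0 : EuclideanSpace ℝ (Fin d)) r := hsupp hz
          have hdist : dist t x < r := by
            rw [dist_comm, dist_eq_norm]
            simpa [mem_ball_zero_iff] using hmem
          have h1 : ehrenSeq E0 ψ k t = 0 := by
            refine IH t fun y hy => hx y ?_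
            calc dist y x ≤ dist y t + dist t x := dist_triangle _ _ _
              _ ≤ k * r + r := add_le_add hy hdist.le
              _ = (k + 1 : ℕ) * r := by push_cast; ring
          rw [h1, zero_mul]
      rw [hform, heq, integral_zero]
  -- derivative bounds
  have hfdint : Integrable (fderiv ℝ ψ) volume :=
    Continuous.integrable_of_hasCompactSupport
      (hψs.continuous_fderiv (by simp)) (hψc.fderiv ℝ)
  have hB0 : (0:ℝ) ≤ B := le_trans (integral_nonneg fun t => norm_nonneg _) hB
  have hnrm : ∀ k x, ‖ehrenSeq E0 ψ k x‖ ≤ 1 := fun k x => by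
    have := (basic k).2.2.1 x
    rw [Real.norm_eq_abs, abs_le]
    exact ⟨by linarith [this.1], this.2⟩
  have deriv : ∀ k, ∀ j, j ≤ k → ∀ x, ‖iteratedFDeriv ℝ j (ehrenSeq E0 ψ k) x‖ ≤ B ^ j := by
    intro k
    induction k with
    | zero =>
      intro j hj x
      interval_cases j
      rw [norm_iteratedFDeriv_zero, pow_zero]
      exact hnrm 0 x
    | succ k IH =>
      intro j hj x
      match j with
      | 0 =>
        rw [norm_iteratedFDeriv_zero, pow_zero]
        exact hnrm _ x
      | (i+1) =>
        have hik : i ≤ k := by omega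
        have hfd : fderiv ℝ (ehrenSeq E0 ψ (k+1))
            = (ehrenSeq E0 ψ k) ⋆[(ContinuousLinearMap.mul ℝ ℝ).precompR
                (EuclideanSpace ℝ (Fin d)), volume] (fderiv ℝ ψ) := by
          rw [hsucc]
          exact funext fun y => (hψc.hasFDerivAt_convolution_right (ContinuousLinearMap.mul ℝ ℝ)
            (basic k).1.locallyIntegrable (hψs.of_le (mod_cast le_top)) y).fderiv
        have hflip : (ehrenSeq E0 ψ k) ⋆[(ContinuousLinearMap.mul ℝ ℝ).precompR
                (EuclideanSpace ℝ (Fin d)), volume] (fderiv ℝ ψ)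
            = (fderiv ℝ ψ) ⋆[((ContinuousLinearMap.mul ℝ ℝ).precompR
                (EuclideanSpace ℝ (Fin d))).flip, volume] (ehrenSeq E0 ψ k) :=
          (convolution_flip _).symm
        have hred : ‖iteratedFDeriv ℝ (i+1) (ehrenSeq E0 ψ (k+1)) x‖
            = ‖iteratedFDeriv ℝ i ((fderiv ℝ ψ) ⋆[((ContinuousLinearMap.mul ℝ ℝ).precompR
                (EuclideanSpace ℝ (Fin d))).flip, volume] (ehrenSeq E0 ψ k)) x‖ := by
          rw [← norm_iteratedFDeriv_fderiv, hfd, hflip]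
        have hLle : ‖((ContinuousLinearMap.mul ℝ ℝ).precompR
            (EuclideanSpace ℝ (Fin d))).flip‖ ≤ 1 := by
          rw [ContinuousLinearMap.opNorm_flip]
          exact ((ContinuousLinearMap.mul ℝ ℝ).norm_precompR_le
            (EuclideanSpace ℝ (Fin d))).trans (ContinuousLinearMap.opNorm_mul_le ℝ ℝ)
        have hfinal : ‖iteratedFDeriv ℝ i ((fderiv ℝ ψ) ⋆[((ContinuousLinearMap.mul ℝ ℝ).precompR
                (EuclideanSpace ℝ (Fin d))).flip, volume] (ehrenSeq E0 ψ k)) x‖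
            ≤ ‖((ContinuousLinearMap.mul ℝ ℝ).precompR (EuclideanSpace ℝ (Fin d))).flip‖
              * (∫ t, ‖fderiv ℝ ψ t‖) * B ^ i := by
          match i with
          | 0 =>
            rw [norm_iteratedFDeriv_zero]
            simpa [pow_zero] using
              ehren_conv_bound₀ (C := 1) ((ContinuousLinearMap.mul ℝ ℝ).precompR
                (EuclideanSpace ℝ (Fin d))).flip hfdint
                (fun y => (hnrm k y).trans (by norm_num)) x
          | (i'+1) =>
            have hk1 : 1 ≤ k := by omega
            exact ehren_conv_bound (i'+1) _ (fderiv ℝ ψ) (ehrenSeq E0 ψ k) hfdint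
              ((basic k).2.2.2 hk1) (basic k).2.1 (fun y => IH (i'+1) hik y) x
        rw [hred]
        refine hfinal.trans ?_
        have h2 : ‖((ContinuousLinearMap.mul ℝ ℝ).precompR (EuclideanSpace ℝ (Fin d))).flip‖
            * (∫ t, ‖fderiv ℝ ψ t‖) ≤ B := by
          calc _ ≤ 1 * B := mul_le_mul hLle hB (integral_nonneg fun t => norm_nonneg _) zero_le_one
          _ = B := one_mul B
        calc ‖((ContinuousLinearMap.mul ℝ ℝ).precompR (EuclideanSpace ℝ (Fin d))).flip‖
              * (∫ t, ‖fderiv ℝ ψ t‖) * B ^ i ≤ B * B ^ i :=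
              mul_le_mul_of_nonneg_right h2 (pow_nonneg hB0 i)
          _ = B ^ (i+1) := by rw [pow_succ]; ring
  exact ⟨(basic k₀).2.2.2 hk₀, (basic k₀).2.1, (basic k₀).2.2.1, val1 k₀, val0 k₀, deriv k₀⟩

private lemma ehren_mollifier {d : ℕ} (b : ContDiffBump (0 : EuclideanSpace ℝ (Fin d)))
    (hb1 : b.rOut = 1) {s : ℝ} (hs : 0 < s)
    (ψ : EuclideanSpace ℝ (Fin d) → ℝ)
    (hψ : ψ = fun x => s ^ (Module.finrank ℝ (EuclideanSpace ℝ (Fin d))) * b.normed volume (s • x)) :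
    ContDiff ℝ (⊤ : ℕ∞) ψ ∧ HasCompactSupport ψ ∧ (∀ x, 0 ≤ ψ x) ∧ ((∫ x, ψ x) = 1) ∧
      support ψ ⊆ ball 0 (1/s) ∧
      (∫ x, ‖fderiv ℝ ψ x‖) ≤ s * (∫ x, ‖fderiv ℝ (b.normed volume) x‖) := by
  set e := Module.finrank ℝ (EuclideanSpace ℝ (Fin d)) with he
  set f := b.normed volume with hf
  have hse : (0:ℝ) < s ^ e := pow_pos hs e
  have hfs : ContDiff ℝ (⊤ : ℕ∞) f := b.contDiff_normed
  have hsm : ContDiff ℝ (⊤ : ℕ∞) ψ := by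
    rw [hψ]
    exact contDiff_const.mul (hfs.comp (contDiff_id.const_smul s))
  have hsupp : support ψ ⊆ ball 0 (1/s) := by
    intro x hx
    have hfx : f (s • x) ≠ 0 := by
      intro h0
      apply hx
      rw [hψ]; simp [h0]
    have hmem : s • x ∈ support f := hfx
    rw [hf, b.support_normed_eq, hb1] at hmem
    have hlt : ‖s • x‖ < 1 := by simpa [mem_ball_zero_iff] using hmem
    rw [norm_smul, Real.norm_eq_abs, abs_of_pos hs] at hlt
    rw [mem_ball_zero_iff]
    rw [lt_div_iff₀ hs]
    linarith [mul_comm s ‖x‖]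
  have hcs : HasCompactSupport ψ := by
    refine HasCompactSupport.intro (isCompact_closedBall (0 : EuclideanSpace ℝ (Fin d)) (1/s))
      fun x hx => ?_
    by_contra h0
    exact hx (ball_subset_closedBall (hsupp h0))
  have hnn : ∀ x, 0 ≤ ψ x := fun x => by
    rw [hψ]; exact mul_nonneg hse.le (b.nonneg_normed _)
  have hint1 : (∫ x, ψ x) = 1 := by
    rw [hψ, integral_const_mul, Measure.integral_comp_smul volume f s]
    rw [b.integral_normed (μ := volume)]
    rw [smul_eq_mul, mul_one, abs_of_pos (inv_pos.2 hse)]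
    exact mul_inv_cancel₀ hse.ne'
  -- derivative
  have hdiff : Differentiable ℝ f := hfs.differentiable (by simp)
  have hfd : ∀ x, fderiv ℝ ψ x
      = s ^ e • ((fderiv ℝ f (s • x)).comp (s • ContinuousLinearMap.id ℝ _)) := by
    intro x
    have h1 : HasFDerivAt (fun y : EuclideanSpace ℝ (Fin d) => s • y)
        (s • ContinuousLinearMap.id ℝ (EuclideanSpace ℝ (Fin d))) x :=
      (hasFDerivAt_id x).const_smul s
    have h2 : HasFDerivAt f (fderiv ℝ f (s • x)) (s • x) := (hdiff (s • x)).hasFDerivAt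
    have h3 := (h2.comp x h1).const_mul (s ^ e)
    rw [hψ]
    exact h3.fderiv
  have hbd : ∀ x, ‖fderiv ℝ ψ x‖ ≤ s ^ (e+1) * ‖fderiv ℝ f (s • x)‖ := by
    intro x
    rw [hfd x, norm_smul, Real.norm_eq_abs, abs_of_pos hse]
    have h4 : ‖(fderiv ℝ f (s • x)).comp (s • ContinuousLinearMap.id ℝ
        (EuclideanSpace ℝ (Fin d)))‖ ≤ ‖fderiv ℝ f (s • x)‖ * s := by
      refine (ContinuousLinearMap.opNorm_comp_le _ _).trans ?_
      have h5 : ‖s • ContinuousLinearMap.id ℝ (EuclideanSpace ℝ (Fin d))‖ ≤ s := by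
        refine (norm_smul_le s (ContinuousLinearMap.id ℝ (EuclideanSpace ℝ (Fin d)))).trans ?_
        rw [Real.norm_eq_abs, abs_of_pos hs]
        calc s * ‖ContinuousLinearMap.id ℝ (EuclideanSpace ℝ (Fin d))‖ ≤ s * 1 :=
          mul_le_mul_of_nonneg_left (ContinuousLinearMap.norm_id_le) hs.le
        _ = s := mul_one s
      exact mul_le_mul_of_nonneg_left h5 (norm_nonneg _)
    calc s ^ e * ‖(fderiv ℝ f (s • x)).comp (s • ContinuousLinearMap.id ℝ
        (EuclideanSpace ℝ (Fin d)))‖ ≤ s ^ e * (‖fderiv ℝ f (s • x)‖ * s) :=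
        mul_le_mul_of_nonneg_left h4 hse.le
      _ = s ^ (e+1) * ‖fderiv ℝ f (s • x)‖ := by rw [pow_succ]; ring
  have hfdi : Integrable (fderiv ℝ f) volume :=
    Continuous.integrable_of_hasCompactSupport
      (hfs.continuous_fderiv (by simp)) (b.hasCompactSupport_normed.fderiv ℝ)
  have hcompint : Integrable (fun x => ‖fderiv ℝ f (s • x)‖) volume :=
    hfdi.norm.comp_smul hs.ne'
  refine ⟨hsm, hcs, hnn, hint1, hsupp, ?_⟩
  calc (∫ x, ‖fderiv ℝ ψ x‖)
      ≤ ∫ x, s ^ (e+1) * ‖fderiv ℝ f (s • x)‖ :=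
        integral_mono_of_nonneg (Filter.Eventually.of_forall fun x => norm_nonneg _)
          (hcompint.const_mul _) (Filter.Eventually.of_forall hbd)
    _ = s ^ (e+1) * ∫ x, ‖fderiv ℝ f (s • x)‖ := integral_const_mul _ _
    _ = s ^ (e+1) * ((s ^ e)⁻¹ * ∫ x, ‖fderiv ℝ f x‖) := by
        rw [Measure.integral_comp_smul volume (fun x => ‖fderiv ℝ f x‖) s, smul_eq_mul,
          abs_of_pos (inv_pos.2 hse)]
    _ = s * ∫ x, ‖fderiv ℝ f x‖ := by
        rw [pow_succ]
        field_simp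

private lemma ehren_core {d : ℕ} (K L : Set (EuclideanSpace ℝ (Fin d)))
    (hK : IsCompact K) (hKne : K.Nonempty) {δ : ℝ} (hδ : 0 < δ)
    (hsep : ∀ x ∈ K, ∀ y ∈ L, δ ≤ dist x y) :
    ∃ ρ : ℝ, 0 < ρ ∧ ∃ χ : ℕ → EuclideanSpace ℝ (Fin d) → ℝ,
      ∀ N : ℕ, 1 ≤ N →
        ContDiff ℝ (⊤ : ℕ∞) (χ N) ∧ HasCompactSupport (χ N) ∧
        (∀ x, χ N x ∈ Set.Icc (0 : ℝ) 1) ∧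
        (∀ x ∈ K, χ N x = 1) ∧
        (∀ x ∈ L, χ N x = 0) ∧
        (∀ j : ℕ, j ≤ N → ∀ x, ‖iteratedFDeriv ℝ j (χ N) x‖ ≤ (ρ * N) ^ j) := by
  classical
  set b : ContDiffBump (0 : EuclideanSpace ℝ (Fin d)) :=
    ⟨1/2, 1, by norm_num, by norm_num⟩ with hbdef
  set A := ∫ x, ‖fderiv ℝ (b.normed volume) x‖ with hAdef
  have hA0 : 0 ≤ A := integral_nonneg fun x => norm_nonneg _
  set ρ : ℝ := max 1 (4 * A / δ) with hρdef
  have hρ0 : (0:ℝ) < ρ := lt_of_lt_of_le one_pos (le_max_left _ _)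
  set E0 := cthickening (δ/2) K with hE0def
  have hEc : IsCompact E0 := hK.cthickening
  refine ⟨ρ, hρ0, fun N => ehrenSeq E0
    (fun x => ((4*N/δ) ^ (Module.finrank ℝ (EuclideanSpace ℝ (Fin d))))
      * b.normed volume ((4*N/δ) • x)) N, fun N hN => ?_⟩
  have hN0 : (0:ℝ) < (N:ℝ) := by exact_mod_cast Nat.lt_of_lt_of_le Nat.zero_lt_one hN
  have hspos : (0:ℝ) < 4*N/δ := by positivity
  obtain ⟨hψs, hψc, hψ0, hψ1, hψsupp, hψfd⟩ := ehren_mollifier b rfl hspos _ rfl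
  have hrdiv : 1/(4*(N:ℝ)/δ) = δ/(4*N) := one_div_div _ _
  rw [hrdiv] at hψsupp
  have hBρ : (∫ x, ‖fderiv ℝ (fun x => ((4*N/δ) ^ (Module.finrank ℝ (EuclideanSpace ℝ (Fin d))))
      * b.normed volume ((4*N/δ) • x)) x‖) ≤ ρ * N := by
    refine hψfd.trans ?_
    have h1 : 4*(N:ℝ)/δ * A = (4*A/δ) * N := by ring
    rw [h1]
    exact mul_le_mul_of_nonneg_right (le_max_right _ _) hN0.le
  obtain ⟨h1, h2, h3, h4, h5, h6⟩ :=
    ehren_one E0 hEc _ hψs hψc hψ0 hψ1 hψsupp hBρ N hN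
  have hNr : (N:ℝ) * (δ/(4*N)) = δ/4 := by
    field_simp
  refine ⟨h1, h2, h3, ?_, ?_, h6⟩
  · intro x hxK
    apply h4
    intro y hy
    rw [hNr] at hy
    exact mem_cthickening_of_dist_le y x (δ/2) K hxK (by linarith)
  · intro x hxL
    apply h5
    intro y hy hymem
    rw [hNr] at hy
    have h7 : infDist y K ≤ δ/2 := by
      rw [hE0def, mem_cthickening_iff] at hymem
      exact ENNReal.toReal_le_of_le_ofReal (by linarith) hymem
    obtain ⟨z, hzK, hz⟩ := hK.exists_infDist_eq_dist hKne y
    have h8 : dist y z ≤ δ/2 := by rw [← hz]; exact h7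
    have h9 := hsep z hzK x hxL
    have h10 := dist_triangle z y x
    rw [dist_comm z y] at h10
    linarith

/-- **Ehrenpreis cutoffs.** If `K ⊆ ℝ^d` is compact and `L ⊆ ℝ^d` is closed with
`K ∩ L = ∅`, there are `ρ > 0` and smooth compactly supported cutoffs `χ_N` with values
in `[0,1]`, equal to `1` on `K` and `0` on `L`, whose derivatives of order `j ≤ N` are
bounded by `(ρ N)^j`. -/
theorem stmt_0 (d : ℕ) (hd : 1 ≤ d)
    (K L : Set (EuclideanSpace ℝ (Fin d)))
    (hK : IsCompact K) (hL : IsClosed L) (hKL : K ∩ L = ∅) :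
    ∃ ρ : ℝ, 0 < ρ ∧ ∃ χ : ℕ → EuclideanSpace ℝ (Fin d) → ℝ,
      ∀ N : ℕ, 1 ≤ N →
        ContDiff ℝ (⊤ : ℕ∞) (χ N) ∧ HasCompactSupport (χ N) ∧
        (∀ x, χ N x ∈ Set.Icc (0 : ℝ) 1) ∧
        (∀ x ∈ K, χ N x = 1) ∧
        (∀ x ∈ L, χ N x = 0) ∧
        (∀ j : ℕ, j ≤ N → ∀ x, ‖iteratedFDeriv ℝ j (χ N) x‖ ≤ (ρ * N) ^ j) := by
  rcases K.eq_empty_or_nonempty with rfl | hKne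
  · refine ⟨1, one_pos, fun _ _ => 0, fun N hN => ?_⟩
    refine ⟨contDiff_const, HasCompactSupport.intro isCompact_empty (fun x _ => rfl),
      fun x => ⟨le_refl 0, zero_le_one⟩, fun x hx => absurd hx (notMem_empty x),
      fun _ _ => rfl, fun j hj x => ?_⟩
    have hz : iteratedFDeriv ℝ j (fun _ : EuclideanSpace ℝ (Fin d) => (0:ℝ)) = 0 :=
      iteratedFDeriv_zero_fun
    have : ‖iteratedFDeriv ℝ j ((fun (_ : ℕ) (_ : EuclideanSpace ℝ (Fin d)) => (0:ℝ)) N) x‖ = 0 := by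
      rw [hz]; simp
    rw [this]
    positivity
  rcases L.eq_empty_or_nonempty with rfl | hLne
  · exact ehren_core K ∅ hK hKne one_pos (fun x _ y hy => absurd hy (notMem_empty y))
  · obtain ⟨x₀, hx₀K, hmin⟩ := hK.exists_isMinOn hKne (continuous_infDist_pt L).continuousOn
    have hx₀L : x₀ ∉ L := fun h => by
      have : x₀ ∈ K ∩ L := ⟨hx₀K, h⟩
      rw [hKL] at this
      exact notMem_empty _ this
    have hδ : 0 < infDist x₀ L := (hL.notMem_iff_infDist_pos hLne).1 hx₀L
    refine ehren_core K L hK hKne hδ fun x hx y hy => ?_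
    calc infDist x₀ L ≤ infDist x L := hmin hx
      _ ≤ dist x y := infDist_le_dist_of_mem hy
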